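/- Let α > 0 and ν > ν_* := (α+1)α^{−α/(α+1)}. The equation y^{2α} + 1/y² = ν has exactly two solutions 0 < ŷ₋(ν) < ŷ₊(ν) on (0,∞), and there exist constants 0 < r₋, r₊ < 1 and R₋, R₊ > 1 independent of ν such that r₋ ν^{−1/2} < ŷ₋(ν) < R₋ ν^{−1/2} and r₊ ν^{1/(2α)} < ŷ₊(ν) < R₊ ν^{1/(2α)} for all ν > ν_*. -/

import Mathlib

open Set

/-- The rescaled potential `g(y) = y^{2α} + 1/y²`. -/
noncomputable def g15 (α : ℝ) (y : ℝ) : ℝ := y ^ (2 * α) + 1 / y ^ 2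

namespace Stmt15Aux

open Real

/-- The location of the minimum of `g15 α` on `(0,∞)`. -/
noncomputable def cst (α : ℝ) : ℝ := α ^ (-(1:ℝ)/(2*α+2))

lemma cst_pos {α : ℝ} (hα : 0 < α) : 0 < cst α := rpow_pos_of_pos hα _

lemma cst_rpow {α : ℝ} (hα : 0 < α) : cst α ^ (2*α+2) = α⁻¹ := by
  rw [cst, ← Real.rpow_mul hα.le]
  have h : -(1:ℝ)/(2*α+2) * (2*α+2) = -1 := by field_simp
  rw [h, Real.rpow_neg_one]

lemma cst_rpow2a {α : ℝ} (hα : 0 < α) : cst α ^ (2*α) = α ^ (-α/(α+1)) := by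
  rw [cst, ← Real.rpow_mul hα.le]
  congr 1
  have h1 : 2*α+2 ≠ 0 := by positivity
  have h2 : α+1 ≠ 0 := by positivity
  field_simp

lemma cst_inv_sq {α : ℝ} (hα : 0 < α) : 1 / (cst α) ^ 2 = α * α ^ (-α/(α+1)) := by
  have h0 : (cst α) ^ 2 = cst α ^ ((2:ℕ):ℝ) := (Real.rpow_natCast _ 2).symm
  rw [h0, cst, ← Real.rpow_mul hα.le]
  have h1 : 2*α+2 ≠ 0 := by positivity
  have h2 : α+1 ≠ 0 := by positivity
  have h3 : -(1:ℝ)/(2*α+2) * ((2:ℕ):ℝ) = -(1/(α+1)) := by push_cast; field_simp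
  rw [h3, Real.rpow_neg hα.le, one_div, inv_inv]
  rw [show α * α ^ (-α/(α+1)) = α ^ (1:ℝ) * α ^ (-α/(α+1)) by rw [Real.rpow_one],
    ← Real.rpow_add hα]
  congr 1
  field_simp
  ring

lemma g_cst {α : ℝ} (hα : 0 < α) : g15 α (cst α) = (α+1) * α ^ (-α/(α+1)) := by
  rw [g15, cst_rpow2a hα, cst_inv_sq hα]; ring

lemma g15_hasDerivAt {α : ℝ} {x : ℝ} (hx : 0 < x) :
    HasDerivAt (g15 α) (2*α * x ^ (2*α - 1) - 2 / x ^ 3) x := by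
  have h1 : HasDerivAt (fun y : ℝ => y ^ (2*α)) (2*α * x ^ (2*α - 1)) x :=
    Real.hasDerivAt_rpow_const (Or.inl hx.ne')
  have h2 : HasDerivAt (fun y : ℝ => (y^2)⁻¹) (-(↑2 * x ^ (2-1)) / (x ^ 2) ^ 2) x :=
    (hasDerivAt_pow 2 x).inv (by positivity)
  have h := h1.add h2
  have he : (fun y : ℝ => y ^ (2*α) + (y^2)⁻¹) = g15 α := by
    funext y; simp [g15, one_div]
  simp only [Pi.add_def] at h
  rw [he] at h
  refine h.congr_deriv ?_
  have hx0 : x ≠ 0 := hx.ne'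
  field_simp
  ring

lemma deriv_fact {α : ℝ} {x : ℝ} (hx : 0 < x) :
    2*α * x ^ (2*α - 1) - 2 / x ^ 3 = 2 * (α * x ^ (2*α+2) - 1) / x ^ 3 := by
  have h3 : x ^ (2*α - 1) = x ^ (2*α + 2) / x ^ 3 := by
    rw [← Real.rpow_natCast x 3, ← Real.rpow_sub hx]
    norm_num
    ring_nf
  rw [h3]
  have : x ^ 3 ≠ 0 := by positivity
  field_simp

lemma gderiv_neg {α : ℝ} (hα : 0 < α) {x : ℝ} (hx : 0 < x) (hxc : x < cst α) :
    deriv (g15 α) x < 0 := by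
  rw [(g15_hasDerivAt hx).deriv, deriv_fact hx]
  have h1 : x ^ (2*α+2) < α⁻¹ := by
    rw [← cst_rpow hα]
    exact Real.rpow_lt_rpow hx.le hxc (by positivity)
  have h2 : α * x ^ (2*α+2) < 1 := by
    rw [← mul_inv_cancel₀ hα.ne']
    exact (mul_lt_mul_iff_right₀ hα).mpr h1
  have h3 : (0:ℝ) < x ^ 3 := by positivity
  apply div_neg_of_neg_of_pos _ h3
  nlinarith

lemma gderiv_pos {α : ℝ} (hα : 0 < α) {x : ℝ} (hxc : cst α < x) :
    0 < deriv (g15 α) x := by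
  have hx : 0 < x := (cst_pos hα).trans hxc
  rw [(g15_hasDerivAt hx).deriv, deriv_fact hx]
  have h1 : α⁻¹ < x ^ (2*α+2) := by
    rw [← cst_rpow hα]
    exact Real.rpow_lt_rpow (cst_pos hα).le hxc (by positivity)
  have h2 : 1 < α * x ^ (2*α+2) := by
    rw [← mul_inv_cancel₀ hα.ne']
    exact (mul_lt_mul_iff_right₀ hα).mpr h1
  have h3 : (0:ℝ) < x ^ 3 := by positivity
  apply div_pos _ h3
  nlinarith

lemma contOn {α : ℝ} {s : Set ℝ} (hs : ∀ x ∈ s, 0 < x) :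
    ContinuousOn (g15 α) s := fun x hx =>
  ((g15_hasDerivAt (hs x hx)).continuousAt).continuousWithinAt

lemma g_anti {α : ℝ} (hα : 0 < α) : StrictAntiOn (g15 α) (Ioc 0 (cst α)) := by
  apply strictAntiOn_of_deriv_neg (convex_Ioc _ _) (contOn (fun x hx => hx.1))
  intro x hx
  rw [interior_Ioc] at hx
  exact gderiv_neg hα hx.1 hx.2

lemma g_mono {α : ℝ} (hα : 0 < α) : StrictMonoOn (g15 α) (Ici (cst α)) := by
  apply strictMonoOn_of_deriv_pos (convex_Ici _)
    (contOn (fun x hx => (cst_pos hα).trans_le hx))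
  intro x hx
  rw [interior_Ici] at hx
  exact gderiv_pos hα hx

end Stmt15Aux

set_option maxHeartbeats 2000000 in
open Stmt15Aux Real in
/-- For `ν > ν_* = (α+1)α^{−α/(α+1)}`, the equation `y^{2α} + 1/y² = ν` has exactly
two positive solutions `ŷ₋(ν) < ŷ₊(ν)`, and there are constants
`0 < r₋, r₊ < 1 < R₋, R₊` independent of `ν` with
`r₋ ν^{−1/2} < ŷ₋(ν) < R₋ ν^{−1/2}` and `r₊ ν^{1/(2α)} < ŷ₊(ν) < R₊ ν^{1/(2α)}`. -/
theorem stmt15 (α : ℝ) (hα : 0 < α) :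
    ∃ rm rp Rm Rp : ℝ, 0 < rm ∧ rm < 1 ∧ 0 < rp ∧ rp < 1 ∧ 1 < Rm ∧ 1 < Rp ∧
      ∀ ν : ℝ, (α + 1) * α ^ (-α / (α + 1)) < ν →
        ∃ ym yp : ℝ, 0 < ym ∧ ym < yp ∧
          g15 α ym = ν ∧ g15 α yp = ν ∧
          (∀ y : ℝ, 0 < y → g15 α y = ν → y = ym ∨ y = yp) ∧
          rm * ν ^ (-(1:ℝ)/2) < ym ∧ ym < Rm * ν ^ (-(1:ℝ)/2) ∧
          rp * ν ^ (1 / (2 * α)) < yp ∧ yp < Rp * ν ^ (1 / (2 * α)) := by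
  have hα1 : (0:ℝ) < α + 1 := by linarith
  refine ⟨1/2, (α+1) ^ (-(1:ℝ)/(2*α)), ((α+1)/α) ^ ((1:ℝ)/2), 2,
    by norm_num, by norm_num, rpow_pos_of_pos hα1 _,
    Real.rpow_lt_one_of_one_lt_of_neg (by linarith)
      (by rw [neg_div]; exact neg_neg_iff_pos.mpr (by positivity)), ?_, by norm_num, ?_⟩
  · rw [show (1:ℝ) < ((α+1)/α) ^ ((1:ℝ)/2) ↔ _ from Real.one_lt_rpow_iff_of_pos (by positivity)]
    left
    constructor
    · rw [lt_div_iff₀ hα]; linarith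
    · norm_num
  intro ν hν
  set A : ℝ := α ^ (-α/(α+1)) with hA
  have hApos : 0 < A := rpow_pos_of_pos hα _
  have hgc : g15 α (cst α) = (α+1) * A := g_cst hα
  have hνg : g15 α (cst α) < ν := by rw [hgc]; exact hν
  have hν0 : 0 < ν := lt_trans (by rw [hgc]; positivity) hνg
  set X : ℝ := ν ^ (-(1:ℝ)/2) with hXdef
  set Y : ℝ := ν ^ (1/(2*α)) with hYdef
  have hX : 0 < X := rpow_pos_of_pos hν0 _
  have hY : 0 < Y := rpow_pos_of_pos hν0 _
  have hX2 : X ^ 2 = ν⁻¹ := by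
    rw [hXdef, ← Real.rpow_natCast (ν ^ (-(1:ℝ)/2)) 2, ← Real.rpow_mul hν0.le]
    norm_num
    exact Real.rpow_neg_one ν
  have hY2a : Y ^ (2*α) = ν := by
    rw [hYdef, ← Real.rpow_mul hν0.le]
    rw [show 1/(2*α) * (2*α) = 1 by field_simp]
    exact Real.rpow_one ν
  have hc := cst_pos hα
  -- existence of ym
  set a : ℝ := min (cst α) X / 2 with hadef
  have ha0 : 0 < a := by positivity
  have hac : a < cst α := by
    have : a ≤ cst α / 2 := by
      apply div_le_div_of_nonneg_right ?_ (by norm_num)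
      exact min_le_left _ _
    linarith
  have haX : a ≤ X / 2 := div_le_div_of_nonneg_right (min_le_right _ _) (by norm_num)
  have hga : ν < g15 α a := by
    have h1 : a ^ 2 ≤ (X/2) ^ 2 := pow_le_pow_left₀ ha0.le haX 2
    have hX2ν : X ^ 2 * ν = 1 := by rw [hX2]; field_simp
    have h2 : 4 * ν ≤ 1 / a ^ 2 := by
      rw [le_div_iff₀ (by positivity)]
      nlinarith
    have h3 : 0 < a ^ (2*α) := rpow_pos_of_pos ha0 _
    rw [g15]
    nlinarith
  obtain ⟨ym, hymmem, hgym⟩ :=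
    intermediate_value_Icc' hac.le (contOn (fun x hx => lt_of_lt_of_le ha0 hx.1))
      ⟨hνg.le, hga.le⟩
  have hym0 : 0 < ym := lt_of_lt_of_le ha0 hymmem.1
  have hymc : ym < cst α := by
    rcases lt_or_eq_of_le hymmem.2 with h | h
    · exact h
    · exfalso; rw [h] at hgym; exact absurd hgym (ne_of_lt hνg)
  -- existence of yp
  set b : ℝ := 2 * max (cst α) Y with hbdef
  have hbc : cst α < b := by
    have h1 : cst α ≤ max (cst α) Y := le_max_left _ _
    have h2 : 0 < max (cst α) Y := lt_of_lt_of_le hc h1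
    linarith
  have hgb : ν < g15 α b := by
    have h1 : 2 * Y ≤ b := by
      have := le_max_right (cst α) Y
      rw [hbdef]; linarith
    have h2 : (2*Y) ^ (2*α) ≤ b ^ (2*α) :=
      Real.rpow_le_rpow (by positivity) h1 (by positivity)
    have h3 : (2*Y) ^ (2*α) = 2 ^ (2*α) * ν := by
      rw [Real.mul_rpow (by norm_num) hY.le, hY2a]
    have h4 : (1:ℝ) < 2 ^ (2*α) := by
      rw [show (1:ℝ) < (2:ℝ) ^ (2*α) ↔ _ from Real.one_lt_rpow_iff_of_pos (by norm_num)]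
      left; constructor <;> [norm_num; positivity]
    have h5 : 0 < 1 / b ^ 2 := by positivity
    rw [g15]
    nlinarith
  obtain ⟨yp, hypmem, hgyp⟩ :=
    intermediate_value_Icc hbc.le (contOn (fun x hx => lt_of_lt_of_le hc hx.1))
      ⟨hνg.le, hgb.le⟩
  have hcyp : cst α < yp := by
    rcases lt_or_eq_of_le hypmem.1 with h | h
    · exact h
    · exfalso; rw [← h] at hgyp; exact absurd hgyp (ne_of_lt hνg)
  have hyp0 : 0 < yp := hc.trans hcyp
  refine ⟨ym, yp, hym0, hymc.trans hcyp, hgym, hgyp, ?_, ?_, ?_, ?_, ?_⟩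
  · -- uniqueness
    intro y hy0 hgy
    rcases lt_trichotomy y (cst α) with h | h | h
    · left
      exact (g_anti hα).injOn ⟨hy0, h.le⟩ ⟨hym0, hymc.le⟩ (hgy.trans hgym.symm)
    · exfalso; rw [h] at hgy; exact absurd hgy (ne_of_lt hνg)
    · right
      exact (g_mono hα).injOn h.le hcyp.le (hgy.trans hgyp.symm)
  · -- lower bound for ym
    have h3 : 0 < ym ^ (2*α) := rpow_pos_of_pos hym0 _
    have h1 : 1 / ym ^ 2 < ν := by
      rw [g15] at hgym; nlinarith
    have h2 : ν⁻¹ < ym ^ 2 := by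
      rw [div_lt_iff₀ (by positivity)] at h1
      calc ν⁻¹ = 1 / ν := (one_div ν).symm
      _ < ym ^ 2 := by rw [div_lt_iff₀ hν0]; nlinarith
    have h4 : X < ym := by
      apply lt_of_pow_lt_pow_left₀ 2 hym0.le
      rw [hX2]; exact h2
    linarith
  · -- upper bound for ym
    have h1 : ym ^ (2*α) < A := by
      rw [hA, ← cst_rpow2a hα]
      exact Real.rpow_lt_rpow hym0.le hymc (by positivity)
    have h2 : (α+1) * A < ν := hν
    have hea : 1 / ym ^ 2 = ν - ym ^ (2*α) := by rw [g15] at hgym; linarith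
    have hAν : A < ν / (α+1) := by rw [lt_div_iff₀ hα1]; linarith
    have hid : ν * α / (α+1) = ν - ν / (α+1) := by field_simp; ring
    have h3 : ν * α / (α+1) < 1 / ym ^ 2 := by
      rw [hea, hid]
      have : ym ^ (2*α) < ν / (α+1) := h1.trans hAν
      linarith
    have h4 : ym ^ 2 < (α+1) / (α * ν) := by
      rw [div_lt_div_iff₀ hα1 (by positivity)] at h3
      rw [lt_div_iff₀ (by positivity)]
      nlinarith
    have hRm2 : (((α+1)/α) ^ ((1:ℝ)/2)) ^ 2 = (α+1)/α := by
      rw [← Real.rpow_natCast (((α+1)/α) ^ ((1:ℝ)/2)) 2, ← Real.rpow_mul (by positivity)]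
      norm_num
    apply lt_of_pow_lt_pow_left₀ 2 (by positivity)
    rw [mul_pow, hRm2, hX2]
    calc ym ^ 2 < (α+1) / (α * ν) := h4
    _ = (α+1)/α * ν⁻¹ := by rw [division_def, division_def, mul_inv]; ring
  · -- lower bound for yp
    have hcsq : 1 / (cst α) ^ 2 = α * A := cst_inv_sq hα
    have h1 : 1 / yp ^ 2 < 1 / (cst α) ^ 2 := by
      apply one_div_lt_one_div_of_lt (by positivity)
      exact pow_lt_pow_left₀ hcyp hc.le (by norm_num)
    have h2 : ν / (α+1) < yp ^ (2*α) := by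
      rw [g15] at hgyp
      rw [div_lt_iff₀ hα1]
      have h2' : α * A < α * ν / (α+1) := by
        rw [lt_div_iff₀ hα1]; nlinarith [hν]
      nlinarith
    by_contra hcon
    push_neg at hcon
    have h3 : ((α+1) ^ (-(1:ℝ)/(2*α)) * Y) ^ (2*α) = ν / (α+1) := by
      rw [Real.mul_rpow (by positivity) hY.le, hY2a, ← Real.rpow_mul hα1.le]
      rw [show -(1:ℝ)/(2*α) * (2*α) = -1 by field_simp]
      rw [Real.rpow_neg_one]
      ring
    have h4 : yp ^ (2*α) ≤ ((α+1) ^ (-(1:ℝ)/(2*α)) * Y) ^ (2*α) :=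
      Real.rpow_le_rpow hyp0.le hcon (by positivity)
    rw [h3] at h4
    linarith
  · -- upper bound for yp
    have h1 : yp ^ (2*α) < ν := by
      rw [g15] at hgyp
      have : 0 < 1 / yp ^ 2 := by positivity
      linarith
    have h2 : yp < Y := by
      by_contra hcon
      push_neg at hcon
      have := Real.rpow_le_rpow hY.le hcon (by positivity : (0:ℝ) ≤ 2*α)
      rw [hY2a] at this
      linarith
    linarith
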